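/- arXiv:1910.06604 — 3 statements merged into one kernel-verified Lean document; each statement's English description precedes it below -/
import Mathlib

section
/- With r(h) as in the weighted Korobov norm, for each h ∈ 𝒜_d(M) the squared error of the approximated Fourier coefficient satisfies |f̂_h − f̂_h^a|² ≤ ‖f‖_d² · ∑_{ℓ ∈ ℤ^d \ {0}, ℓ·z ≡ 0 (mod n)} 1/r(h+ℓ). -/
open Finset Complex

lemma char_sum (n : ℕ) (hn : 0 < n) (m : ℤ) :
    ∑ k ∈ Finset.Icc 1 n, Complex.exp (2 * (Real.pi : ℂ) * Complex.I * k * m / n) =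
      if m % (n : ℤ) = 0 then (n : ℂ) else 0 := by
  have hn0 : (n : ℂ) ≠ 0 := Nat.cast_ne_zero.mpr hn.ne'
  set ω : ℂ := Complex.exp (2 * (Real.pi : ℂ) * Complex.I * m / n) with hω
  have hterm : ∀ k : ℕ, Complex.exp (2 * (Real.pi : ℂ) * Complex.I * k * m / n) = ω ^ k := by
    intro k
    rw [hω, ← Complex.exp_nat_mul]
    ring_nf
  have hωn : ω ^ n = 1 := by
    rw [hω, ← Complex.exp_nat_mul]
    have : (n : ℂ) * (2 * (Real.pi : ℂ) * Complex.I * m / n) = m * (2 * Real.pi * Complex.I) := by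
      field_simp
    rw [this, Complex.exp_int_mul_two_pi_mul_I]
  split_ifs with hdvd
  · obtain ⟨t, ht⟩ : (n : ℤ) ∣ m := Int.dvd_of_emod_eq_zero hdvd
    have h1 : ∀ k ∈ Finset.Icc 1 n, Complex.exp (2 * (Real.pi : ℂ) * Complex.I * k * m / n) = 1 := by
      intro k _
      have : 2 * (Real.pi : ℂ) * Complex.I * k * m / n = ((k * t : ℤ) : ℂ) * (2 * Real.pi * Complex.I) := by
        rw [ht]; push_cast; field_simp
      rw [this, Complex.exp_int_mul_two_pi_mul_I]
    rw [Finset.sum_congr rfl h1]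
    simp
  · have hω1 : ω ≠ 1 := by
      intro heq
      rw [hω, Complex.exp_eq_one_iff] at heq
      obtain ⟨t, ht⟩ := heq
      have h2pi : (2 * (Real.pi : ℂ) * Complex.I) ≠ 0 := by
        simp [Real.pi_ne_zero, Complex.I_ne_zero]
      have hm' : (m : ℂ) = ((t * n : ℤ) : ℂ) := by
        push_cast
        have h3 : 2 * (Real.pi:ℂ) * Complex.I * m = 2 * (Real.pi:ℂ) * Complex.I * (t * n) := by
          field_simp at ht
          linear_combination (2 * (Real.pi:ℂ) * Complex.I) * ht
        exact mul_left_cancel₀ h2pi h3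
      have hm : m = t * n := by exact_mod_cast hm'
      rw [hm] at hdvd
      simp [Int.mul_emod_left] at hdvd
    have e1 : ∑ k ∈ Finset.Icc 1 n, Complex.exp (2 * (Real.pi : ℂ) * Complex.I * k * m / n)
        = ∑ i ∈ Finset.range n, ω ^ (1 + i) := by
      rw [← Finset.Ico_add_one_right_eq_Icc, Finset.sum_Ico_eq_sum_range]
      exact Finset.sum_congr rfl fun i _ => hterm (1 + i)
    have e2 : ∑ i ∈ Finset.range n, ω ^ (1 + i) = ω * ∑ i ∈ Finset.range n, ω ^ i := by
      rw [Finset.mul_sum]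
      exact Finset.sum_congr rfl fun i _ => by rw [pow_add, pow_one]
    rw [e1, e2, geom_sum_eq hω1, hωn]
    simp

lemma tsum_cauchy_schwarz {ι : Type*} (a b : ι → ℝ) (ha : ∀ i, 0 ≤ a i) (hb : ∀ i, 0 ≤ b i)
    (hsa : Summable fun i => a i ^ 2) (hsb : Summable fun i => b i ^ 2) :
    (∑' i, a i * b i) ^ 2 ≤ (∑' i, a i ^ 2) * ∑' i, b i ^ 2 := by
  set A := ∑' i, a i ^ 2 with hA
  set B := ∑' i, b i ^ 2 with hB
  have hA0 : 0 ≤ A := tsum_nonneg fun i => sq_nonneg _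
  have hB0 : 0 ≤ B := tsum_nonneg fun i => sq_nonneg _
  have hab : Summable fun i => a i * b i := by
    apply (hsa.add hsb).of_nonneg_of_le (fun i => mul_nonneg (ha i) (hb i))
    intro i
    nlinarith [two_mul_le_add_sq (a i) (b i), mul_nonneg (ha i) (hb i)]
  have key : ∀ s : Finset ι, ∑ i ∈ s, a i * b i ≤ Real.sqrt (A * B) := by
    intro s
    have h1 : (∑ i ∈ s, a i * b i) ^ 2 ≤ (∑ i ∈ s, a i ^ 2) * ∑ i ∈ s, b i ^ 2 :=
      Finset.sum_mul_sq_le_sq_mul_sq s a b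
    have h2 : (∑ i ∈ s, a i ^ 2) * ∑ i ∈ s, b i ^ 2 ≤ A * B := by
      apply mul_le_mul (Summable.sum_le_tsum s (fun i _ => sq_nonneg _) hsa)
        (Summable.sum_le_tsum s (fun i _ => sq_nonneg _) hsb)
        (Finset.sum_nonneg fun i _ => sq_nonneg _) hA0
    have h3 : ∑ i ∈ s, a i * b i ≤ Real.sqrt ((∑ i ∈ s, a i * b i) ^ 2) := by
      rw [Real.sqrt_sq (Finset.sum_nonneg fun i _ => mul_nonneg (ha i) (hb i))]
    exact h3.trans (Real.sqrt_le_sqrt (h1.trans h2))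
  have h4 : ∑' i, a i * b i ≤ Real.sqrt (A * B) := Summable.tsum_le_of_sum_le hab key
  calc (∑' i, a i * b i) ^ 2 ≤ Real.sqrt (A * B) ^ 2 := by
        apply pow_le_pow_left₀ (tsum_nonneg fun i => mul_nonneg (ha i) (hb i)) h4
    _ = A * B := Real.sq_sqrt (mul_nonneg hA0 hB0)

lemma exp_term (d n : ℕ) (hn : 0 < n) (z h h' : Fin d → ℤ) (k : ℕ) (c' : ℂ) :
    c' * Complex.exp (2 * (Real.pi : ℂ) * Complex.I *
        (∑ j, (h' j : ℂ) * ((Int.fract ((k : ℝ) * (z j : ℝ) / (n : ℝ)) : ℝ) : ℂ))) *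
      Complex.exp (-(2 * (Real.pi : ℂ) * Complex.I) * (k : ℂ) *
        ((∑ j, h j * z j : ℤ) : ℂ) / (n : ℂ))
    = c' * Complex.exp (2 * (Real.pi : ℂ) * Complex.I * (k : ℂ) *
        (((∑ j, h' j * z j) - (∑ j, h j * z j) : ℤ) : ℂ) / (n : ℂ)) := by
  have hn0R : (n : ℝ) ≠ 0 := Nat.cast_ne_zero.mpr hn.ne'
  have hn0C : (n : ℂ) ≠ 0 := Nat.cast_ne_zero.mpr hn.ne'
  set N : ℤ := ∑ j, h' j * ⌊(k : ℝ) * (z j : ℝ) / (n : ℝ)⌋ with hN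
  have hSR : ∑ j, (h' j : ℝ) * Int.fract ((k : ℝ) * (z j : ℝ) / (n : ℝ))
      = (k : ℝ) * ((∑ j, h' j * z j : ℤ) : ℝ) / (n : ℝ) - (N : ℝ) := by
    have e1 : ∀ j : Fin d, (h' j : ℝ) * Int.fract ((k : ℝ) * (z j : ℝ) / (n : ℝ))
        = (k : ℝ) * ((h' j : ℝ) * (z j : ℝ)) / (n : ℝ)
          - (h' j : ℝ) * ((⌊(k : ℝ) * (z j : ℝ) / (n : ℝ)⌋ : ℤ) : ℝ) := by
      intro j
      rw [← Int.self_sub_floor]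
      ring
    rw [Finset.sum_congr rfl fun j _ => e1 j, Finset.sum_sub_distrib]
    congr 1
    · push_cast
      rw [Finset.mul_sum, Finset.sum_div]
    · rw [hN]; push_cast; ring
  have hSC : (∑ j, (h' j : ℂ) * ((Int.fract ((k : ℝ) * (z j : ℝ) / (n : ℝ)) : ℝ) : ℂ))
      = (k : ℂ) * ((∑ j, h' j * z j : ℤ) : ℂ) / (n : ℂ) - ((N : ℤ) : ℂ) := by
    have : (∑ j, (h' j : ℂ) * ((Int.fract ((k : ℝ) * (z j : ℝ) / (n : ℝ)) : ℝ) : ℂ))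
        = (((∑ j, (h' j : ℝ) * Int.fract ((k : ℝ) * (z j : ℝ) / (n : ℝ))) : ℝ) : ℂ) := by
      push_cast; rfl
    rw [this, hSR]
    push_cast
    ring
  rw [mul_assoc, ← Complex.exp_add, hSC]
  have harg : 2 * (Real.pi : ℂ) * Complex.I *
        ((k : ℂ) * ((∑ j, h' j * z j : ℤ) : ℂ) / (n : ℂ) - ((N : ℤ) : ℂ))
      + -(2 * (Real.pi : ℂ) * Complex.I) * (k : ℂ) * ((∑ j, h j * z j : ℤ) : ℂ) / (n : ℂ)
      = 2 * (Real.pi : ℂ) * Complex.I * (k : ℂ) *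
          (((∑ j, h' j * z j) - (∑ j, h j * z j) : ℤ) : ℂ) / (n : ℂ)
        + ((-N : ℤ) : ℂ) * (2 * (Real.pi : ℂ) * Complex.I) := by
    push_cast
    field_simp
    ring
  rw [harg, Complex.exp_add, Complex.exp_int_mul_two_pi_mul_I, mul_one]

lemma tsum_subtype_ite {ι : Type*} (P : ι → Prop) (f : ι → ℂ) [DecidablePred P] :
    ∑' i : {i // P i}, f i.1 = ∑' i, if P i then f i else 0 := by
  have h1 : ∑' i : ↥{i | P i}, f i.1 = ∑' i, Set.indicator {i | P i} f i := tsum_subtype _ f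
  have h2 : ∀ i, Set.indicator {i | P i} f i = if P i then f i else 0 := by
    intro i; by_cases hp : P i <;> simp [Set.indicator_apply, Set.mem_setOf_eq, hp]
  exact h1.trans (tsum_congr h2)

/-- Cauchy–Schwarz bound on the aliasing error of one approximated Fourier
coefficient: for `h ∈ 𝒜_d(M)` (i.e. `r(h) ≤ M`),
`|f̂ₕ − f̂ₕᵃ|² ≤ ‖f‖_d² · ∑_{ℓ ≠ 0, ℓ·z ≡ 0 (mod n)} 1/r(h+ℓ)`. -/
theorem coefficient_error_bound (d n : ℕ) (hn : n.Prime) (z : Fin d → ℤ)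
    (hz : ∀ j, 1 ≤ z j ∧ z j ≤ (n : ℤ) - 1)
    (α M : ℝ) (hα : 1 < α) (hM : 0 < M)
    (γ : Finset (Fin d) → ℝ) (hγ : ∀ u, 0 < γ u) (hγe : γ ∅ = 1)
    (r : (Fin d → ℤ) → ℝ)
    (hr : ∀ h, r h = (γ (Finset.univ.filter fun j => h j ≠ 0))⁻¹ *
        ∏ j ∈ Finset.univ.filter (fun j => h j ≠ 0), ((h j).natAbs : ℝ) ^ α)
    (c : (Fin d → ℤ) → ℂ) (hc : Summable fun h => ‖c h‖)
    (hnorm : Summable fun h => ‖c h‖ ^ 2 * r h)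
    (f : (Fin d → ℝ) → ℂ)
    (hf : ∀ x, f x = ∑' h : Fin d → ℤ,
      c h * Complex.exp (2 * (Real.pi : ℂ) * Complex.I * (∑ j, (h j : ℂ) * (x j : ℂ))))
    (fa : (Fin d → ℤ) → ℂ)
    (hfa : ∀ h, fa h = (1 / (n : ℂ)) * ∑ k ∈ Finset.Icc 1 n,
        f (fun j => Int.fract ((k : ℝ) * (z j : ℝ) / (n : ℝ))) *
          Complex.exp (-(2 * (Real.pi : ℂ) * Complex.I) * (k : ℂ) *
            ((∑ j, h j * z j : ℤ) : ℂ) / (n : ℂ)))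
    (h : Fin d → ℤ) (hhA : r h ≤ M)
    (hrsum : Summable fun ℓ : {ℓ : Fin d → ℤ // ℓ ≠ 0 ∧ (∑ j, ℓ j * z j) % (n : ℤ) = 0} =>
        1 / r (h + ℓ.1)) :
    ‖c h - fa h‖ ^ 2
      ≤ (∑' h' : Fin d → ℤ, ‖c h'‖ ^ 2 * r h') *
        ∑' ℓ : {ℓ : Fin d → ℤ // ℓ ≠ 0 ∧ (∑ j, ℓ j * z j) % (n : ℤ) = 0},
          1 / r (h + ℓ.1) := by
  classical
  have hnpos : 0 < n := hn.pos
  have hn0C : (n : ℂ) ≠ 0 := Nat.cast_ne_zero.mpr hnpos.ne'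
  have hrpos : ∀ g : Fin d → ℤ, 0 < r g := by
    intro g
    rw [hr g]
    refine mul_pos (inv_pos.mpr (hγ _)) (Finset.prod_pos ?_)
    intro j hj
    rw [Finset.mem_filter] at hj
    exact Real.rpow_pos_of_pos (by exact_mod_cast Int.natAbs_pos.mpr hj.2) α
  -- summability of aliasing terms
  have hE : ∀ k : ℕ, Summable (fun h' : Fin d → ℤ => c h' *
      Complex.exp (2 * (Real.pi:ℂ) * Complex.I * (k:ℂ) *
        (((∑ j, h' j * z j) - (∑ j, h j * z j) : ℤ):ℂ) / (n:ℂ))) := by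
    intro k
    refine Summable.of_norm_bounded hc ?_
    intro h'
    have harg : 2 * (Real.pi:ℂ) * Complex.I * (k:ℂ) *
          (((∑ j, h' j * z j) - (∑ j, h j * z j) : ℤ):ℂ) / (n:ℂ)
        = ((2 * Real.pi * (k:ℝ) * (((∑ j, h' j * z j) - (∑ j, h j * z j) : ℤ):ℝ) / (n:ℝ) : ℝ) : ℂ)
            * Complex.I := by
      push_cast; ring
    rw [norm_mul, harg,
      Complex.norm_exp_ofReal_mul_I, mul_one]
  have stepA : ∀ k ∈ Finset.Icc 1 n,
      f (fun j => Int.fract ((k:ℝ) * (z j : ℝ) / (n:ℝ))) *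
        Complex.exp (-(2 * (Real.pi:ℂ) * Complex.I) * (k:ℂ) * ((∑ j, h j * z j : ℤ):ℂ) / (n:ℂ))
      = ∑' h' : Fin d → ℤ, c h' * Complex.exp (2 * (Real.pi:ℂ) * Complex.I * (k:ℂ) *
          (((∑ j, h' j * z j) - (∑ j, h j * z j) : ℤ):ℂ) / (n:ℂ)) := by
    intro k _
    rw [hf, ← tsum_mul_right]
    refine tsum_congr fun h' => ?_
    beta_reduce
    exact exp_term d n hnpos z h h' k (c h')
  have hfa2 : fa h = ∑' h' : Fin d → ℤ,
      (if ((∑ j, h' j * z j) - (∑ j, h j * z j)) % (n:ℤ) = 0 then c h' else 0) := by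
    calc fa h
        = (1 / (n : ℂ)) * ∑ k ∈ Finset.Icc 1 n,
            f (fun j => Int.fract ((k : ℝ) * (z j : ℝ) / (n : ℝ))) *
              Complex.exp (-(2 * (Real.pi : ℂ) * Complex.I) * (k : ℂ) *
                ((∑ j, h j * z j : ℤ) : ℂ) / (n : ℂ)) := hfa h
      _ = (1 / (n : ℂ)) * ∑ k ∈ Finset.Icc 1 n, ∑' h' : Fin d → ℤ,
            c h' * Complex.exp (2 * (Real.pi:ℂ) * Complex.I * (k:ℂ) *
              (((∑ j, h' j * z j) - (∑ j, h j * z j) : ℤ):ℂ) / (n:ℂ)) := by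
          rw [Finset.sum_congr rfl stepA]
      _ = (1 / (n : ℂ)) * ∑' h' : Fin d → ℤ, ∑ k ∈ Finset.Icc 1 n,
            c h' * Complex.exp (2 * (Real.pi:ℂ) * Complex.I * (k:ℂ) *
              (((∑ j, h' j * z j) - (∑ j, h j * z j) : ℤ):ℂ) / (n:ℂ)) := by
          rw [Summable.tsum_finsetSum (fun k _ => hE k)]
      _ = ∑' h' : Fin d → ℤ, (1 / (n : ℂ)) * ∑ k ∈ Finset.Icc 1 n,
            c h' * Complex.exp (2 * (Real.pi:ℂ) * Complex.I * (k:ℂ) *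
              (((∑ j, h' j * z j) - (∑ j, h j * z j) : ℤ):ℂ) / (n:ℂ)) := by
          rw [tsum_mul_left]
      _ = ∑' h' : Fin d → ℤ,
            (if ((∑ j, h' j * z j) - (∑ j, h j * z j)) % (n:ℤ) = 0 then c h' else 0) := by
          refine tsum_congr fun h' => ?_
          rw [← Finset.mul_sum, char_sum n hnpos ((∑ j, h' j * z j) - (∑ j, h j * z j))]
          split_ifs
          · field_simp
          · simp
  have hm_add : ∀ ℓ : Fin d → ℤ, (∑ j, (h + ℓ) j * z j) - (∑ j, h j * z j) = ∑ j, ℓ j * z j := by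
    intro ℓ
    simp [Pi.add_apply, add_mul, Finset.sum_add_distrib]
  have hfa3 : fa h = ∑' ℓ : Fin d → ℤ,
      (if (∑ j, ℓ j * z j) % (n:ℤ) = 0 then c (h + ℓ) else 0) := by
    rw [hfa2, ← (Equiv.addLeft h).tsum_eq]
    refine tsum_congr fun ℓ => ?_
    simp only [Equiv.coe_addLeft]
    simp only [hm_add ℓ]
  have hcadd : Summable fun ℓ : Fin d → ℤ => ‖c (h + ℓ)‖ :=
    hc.comp_injective (add_right_injective h)
  have hG1 : Summable (fun ℓ : Fin d → ℤ =>
      if (ℓ ≠ 0 ∧ (∑ j, ℓ j * z j) % (n:ℤ) = 0) then c (h + ℓ) else 0) := by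
    refine Summable.of_norm_bounded hcadd ?_
    intro ℓ
    split_ifs <;> simp
  have hG0 : Summable (fun ℓ : Fin d → ℤ => if ℓ = 0 then c (h + 0) else 0) :=
    summable_of_ne_finset_zero (s := {0}) (by
      intro b hb
      rw [if_neg]
      simpa using hb)
  have hsplit : fa h = c h +
      ∑' ℓ : {ℓ : Fin d → ℤ // ℓ ≠ 0 ∧ (∑ j, ℓ j * z j) % (n : ℤ) = 0}, c (h + ℓ.1) := by
    rw [hfa3]
    have e1 : (fun ℓ : Fin d → ℤ => if (∑ j, ℓ j * z j) % (n:ℤ) = 0 then c (h + ℓ) else 0)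
        = (fun ℓ => (if ℓ = 0 then c (h + 0) else 0) +
            (if (ℓ ≠ 0 ∧ (∑ j, ℓ j * z j) % (n:ℤ) = 0) then c (h + ℓ) else 0)) := by
      funext ℓ
      by_cases h0 : ℓ = 0
      · subst h0
        simp
      · simp [h0]
    rw [e1, Summable.tsum_add hG0 hG1]
    congr 1
    · rw [tsum_eq_single 0 (fun b hb => if_neg hb)]
      simp
    · exact (tsum_subtype_ite (fun ℓ : Fin d → ℤ => ℓ ≠ 0 ∧ (∑ j, ℓ j * z j) % (n:ℤ) = 0)
        (fun ℓ => c (h + ℓ))).symm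
  have hkey : ‖c h - fa h‖ =
      ‖∑' ℓ : {ℓ : Fin d → ℤ // ℓ ≠ 0 ∧ (∑ j, ℓ j * z j) % (n : ℤ) = 0}, c (h + ℓ.1)‖ := by
    rw [hsplit]
    rw [show c h - (c h + ∑' ℓ : {ℓ : Fin d → ℤ // ℓ ≠ 0 ∧ (∑ j, ℓ j * z j) % (n : ℤ) = 0},
      c (h + ℓ.1)) = -(∑' ℓ : {ℓ : Fin d → ℤ // ℓ ≠ 0 ∧ (∑ j, ℓ j * z j) % (n : ℤ) = 0},
      c (h + ℓ.1)) from by ring, norm_neg]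
  -- Cauchy–Schwarz
  set Sub := {ℓ : Fin d → ℤ // ℓ ≠ 0 ∧ (∑ j, ℓ j * z j) % (n : ℤ) = 0}
  have hinj : Function.Injective (fun ℓ : Sub => h + ℓ.1) := by
    intro x y hxy
    exact Subtype.ext (add_right_injective h hxy)
  have hcU : Summable fun ℓ : Sub => ‖c (h + ℓ.1)‖ := hc.comp_injective hinj
  have hAU : Summable fun ℓ : Sub => ‖c (h + ℓ.1)‖ ^ 2 * r (h + ℓ.1) := hnorm.comp_injective hinj
  set a : Sub → ℝ := fun ℓ => ‖c (h + ℓ.1)‖ * Real.sqrt (r (h + ℓ.1)) with ha_def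
  set b : Sub → ℝ := fun ℓ => Real.sqrt (1 / r (h + ℓ.1)) with hb_def
  have hab : ∀ ℓ : Sub, a ℓ * b ℓ = ‖c (h + ℓ.1)‖ := by
    intro ℓ
    rw [ha_def, hb_def]
    simp only
    rw [mul_assoc, ← Real.sqrt_mul (hrpos _).le, mul_one_div_cancel (hrpos _).ne', Real.sqrt_one,
      mul_one]
  have ha2 : ∀ ℓ : Sub, a ℓ ^ 2 = ‖c (h + ℓ.1)‖ ^ 2 * r (h + ℓ.1) := by
    intro ℓ
    rw [ha_def]
    simp only
    rw [mul_pow, Real.sq_sqrt (hrpos _).le]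
  have hb2 : ∀ ℓ : Sub, b ℓ ^ 2 = 1 / r (h + ℓ.1) := by
    intro ℓ
    rw [hb_def]
    simp only
    rw [Real.sq_sqrt (by have := hrpos (h + ℓ.1); positivity)]
  have hsa : Summable fun ℓ : Sub => a ℓ ^ 2 := hAU.congr fun ℓ => (ha2 ℓ).symm
  have hsb : Summable fun ℓ : Sub => b ℓ ^ 2 := hrsum.congr fun ℓ => (hb2 ℓ).symm
  rw [hkey]
  calc ‖∑' ℓ : Sub, c (h + ℓ.1)‖ ^ 2
      ≤ (∑' ℓ : Sub, ‖c (h + ℓ.1)‖) ^ 2 := by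
        apply pow_le_pow_left₀ (norm_nonneg _) (norm_tsum_le_tsum_norm hcU)
    _ = (∑' ℓ : Sub, a ℓ * b ℓ) ^ 2 := by
        rw [show (∑' ℓ : Sub, ‖c (h + ℓ.1)‖) = ∑' ℓ : Sub, a ℓ * b ℓ from
          tsum_congr fun ℓ => (hab ℓ).symm]
    _ ≤ (∑' ℓ : Sub, a ℓ ^ 2) * ∑' ℓ : Sub, b ℓ ^ 2 :=
        tsum_cauchy_schwarz a b (fun ℓ => mul_nonneg (norm_nonneg _) (Real.sqrt_nonneg _))
          (fun ℓ => Real.sqrt_nonneg _) hsa hsb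
    _ = (∑' ℓ : Sub, ‖c (h + ℓ.1)‖ ^ 2 * r (h + ℓ.1)) * ∑' ℓ : Sub, 1 / r (h + ℓ.1) := by
        rw [tsum_congr ha2, tsum_congr hb2]
    _ ≤ (∑' h' : Fin d → ℤ, ‖c h'‖ ^ 2 * r h') * ∑' ℓ : Sub, 1 / r (h + ℓ.1) := by
        apply mul_le_mul_of_nonneg_right _ (tsum_nonneg fun ℓ : Sub => by have := hrpos (h + ℓ.1); positivity)
        exact Summable.tsum_le_tsum_of_inj _ hinj (fun g _ => mul_nonneg (sq_nonneg _) (hrpos _).le)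
          (fun ℓ => le_refl _) hAU hnorm
end

section
/- For every s ≥ 0, m > 0 and q > 1/α, the set B̃_s(m) = {h ∈ (ℤ \ {0})^s : ∏_{j=1}^s |h_j|^α ≤ m} satisfies |B̃_s(m)| ≤ [2ζ(αq)]^s m^q, where ζ is the Riemann zeta function. -/
/-- The zeta function value `ζ(x) = ∑_{k ≥ 1} k^{-x}`. -/
noncomputable def zetaR (x : ℝ) : ℝ := ∑' k : ℕ, ((k : ℝ) + 1) ^ (-x)

open Finset

lemma summable_zetaR {x : ℝ} (hx : 1 < x) :
    Summable (fun k : ℕ => ((k : ℝ) + 1) ^ (-x)) := by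
  have h : Summable (fun n : ℕ => (n : ℝ) ^ (-x)) :=
    Real.summable_nat_rpow.mpr (by linarith)
  have h2 := h.comp_injective (add_left_injective 1)
  refine h2.congr fun k => ?_
  simp only [Function.comp]
  push_cast
  ring

lemma zetaR_nonneg {x : ℝ} : 0 ≤ zetaR x :=
  tsum_nonneg fun k => Real.rpow_nonneg (by positivity) _

lemma sum_int_rpow_le {x : ℝ} (hx : 1 < x) (T : Finset ℤ) (hT : ∀ t ∈ T, t ≠ 0) :
    ∑ t ∈ T, ((t.natAbs : ℝ)) ^ (-x) ≤ 2 * zetaR x := by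
  classical
  rw [Finset.sum_comp (fun n : ℕ => ((n : ℝ)) ^ (-x)) Int.natAbs]
  have h1 : ∀ n ∈ T.image Int.natAbs, 1 ≤ n := by
    intro n hn
    obtain ⟨t, ht, rfl⟩ := Finset.mem_image.mp hn
    exact Nat.one_le_iff_ne_zero.mpr (Int.natAbs_ne_zero.mpr (hT t ht))
  have step1 : ∑ n ∈ T.image Int.natAbs, #{a ∈ T | a.natAbs = n} • ((n : ℝ)) ^ (-x)
      ≤ ∑ n ∈ T.image Int.natAbs, 2 * ((n : ℝ)) ^ (-x) := by
    refine Finset.sum_le_sum fun n hn => ?_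
    rw [nsmul_eq_mul]
    have hcard : #{a ∈ T | a.natAbs = n} ≤ 2 := by
      have hsub : {a ∈ T | a.natAbs = n} ⊆ {(n : ℤ), -(n : ℤ)} := by
        intro a ha
        have := (Finset.mem_filter.mp ha).2
        rcases Int.natAbs_eq_iff.mp this with h | h <;> simp [h]
      calc #{a ∈ T | a.natAbs = n} ≤ #({(n : ℤ), -(n : ℤ)} : Finset ℤ) :=
            Finset.card_le_card hsub
        _ ≤ 2 := Finset.card_insert_le _ _ |>.trans (by simp)
    have : (0:ℝ) ≤ ((n : ℝ)) ^ (-x) := Real.rpow_nonneg (by positivity) _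
    have h2 : (#{a ∈ T | a.natAbs = n} : ℝ) ≤ 2 := by exact_mod_cast hcard
    nlinarith
  refine step1.trans ?_
  rw [← Finset.mul_sum]
  refine mul_le_mul_of_nonneg_left ?_ (by norm_num)
  -- reindex via pred
  have key : ∑ k ∈ (T.image Int.natAbs).image (fun n : ℕ => n - 1), ((k : ℝ) + 1) ^ (-x)
      = ∑ n ∈ T.image Int.natAbs, ((n : ℝ)) ^ (-x) := by
    rw [Finset.sum_image (fun a ha b hb hab => by
      have := h1 a ha; have := h1 b hb; omega)]
    refine Finset.sum_congr rfl fun n hn => ?_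
    have h2 := h1 n hn
    have h3 : ((n - 1 : ℕ) : ℝ) = (n : ℝ) - 1 := by
      rw [Nat.cast_sub h2]; simp
    rw [h3]; ring_nf
  rw [← key]
  exact Summable.sum_le_tsum _ (fun k _ => Real.rpow_nonneg (by positivity) _)
    (summable_zetaR hx)

set_option maxHeartbeats 1000000 in
lemma sum_prod_le {x : ℝ} (hx : 1 < x) (s : ℕ) (F : Finset (Fin s → ℤ))
    (hF : ∀ h ∈ F, ∀ j, h j ≠ 0) :
    ∑ h ∈ F, ∏ j, ((h j).natAbs : ℝ) ^ (-x) ≤ (2 * zetaR x) ^ s := by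
  classical
  have hnn : ∀ (h : Fin s → ℤ), (0:ℝ) ≤ ∏ j, ((h j).natAbs : ℝ) ^ (-x) :=
    fun h => Finset.prod_nonneg fun j _ => Real.rpow_nonneg (by positivity) _
  have hsub : F ⊆ Fintype.piFinset (fun j => F.image (fun h => h j)) := by
    intro h hh
    rw [Fintype.mem_piFinset]
    exact fun j => Finset.mem_image_of_mem _ hh
  calc ∑ h ∈ F, ∏ j, ((h j).natAbs : ℝ) ^ (-x)
      ≤ ∑ h ∈ Fintype.piFinset (fun j => F.image (fun h => h j)),
          ∏ j, ((h j).natAbs : ℝ) ^ (-x) :=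
        Finset.sum_le_sum_of_subset_of_nonneg hsub (fun h _ _ => hnn h)
    _ = ∏ j, ∑ t ∈ F.image (fun h => h j), ((t.natAbs : ℝ)) ^ (-x) :=
        (Finset.prod_univ_sum (fun j => F.image (fun h => h j))
          (fun j t => ((t.natAbs : ℝ)) ^ (-x))).symm
    _ ≤ ∏ _j : Fin s, (2 * zetaR x) := by
        refine Finset.prod_le_prod (fun j _ => Finset.sum_nonneg fun t _ =>
          Real.rpow_nonneg (by positivity) _) (fun j _ => ?_)
        refine sum_int_rpow_le hx _ fun t ht => ?_
        obtain ⟨h, hh, rfl⟩ := Finset.mem_image.mp ht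
        exact hF h hh j
    _ = (2 * zetaR x) ^ s := by simp

/-- Hyperbolic-cross counting bound: the set
`B̃_s(m) = {h ∈ (ℤ \ {0})^s : ∏_{j=1}^s |h_j|^α ≤ m}` is finite with
`|B̃_s(m)| ≤ [2ζ(αq)]^s m^q` for all `m > 0` and `q > 1/α`. -/
theorem hyperbolic_cross_count (α : ℝ) (hα : 1 < α) (s : ℕ) (m q : ℝ)
    (hm : 0 < m) (hq : 1 / α < q) :
    {h : Fin s → ℤ | (∀ j, h j ≠ 0) ∧ ∏ j, ((h j).natAbs : ℝ) ^ α ≤ m}.Finite ∧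
    (({h : Fin s → ℤ | (∀ j, h j ≠ 0) ∧ ∏ j, ((h j).natAbs : ℝ) ^ α ≤ m}.ncard : ℝ)
      ≤ (2 * zetaR (α * q)) ^ s * m ^ q) := by
  classical
  have hα0 : (0:ℝ) < α := by linarith
  have hq0 : 0 < q := lt_trans (by positivity) hq
  have hx : 1 < α * q := by
    have := (div_lt_iff₀ hα0).mp hq
    nlinarith
  set B := {h : Fin s → ℤ | (∀ j, h j ≠ 0) ∧ ∏ j, ((h j).natAbs : ℝ) ^ α ≤ m} with hB
  -- coordinates are bounded
  have hbound : ∀ h ∈ B, ∀ j, ((h j).natAbs : ℝ) ≤ m ^ (1/α) := by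
    intro h hh j
    obtain ⟨hne, hle⟩ := hh
    have h1 : ∀ i : Fin s, (1:ℝ) ≤ ((h i).natAbs : ℝ) ^ α := by
      intro i
      refine Real.one_le_rpow ?_ hα0.le
      exact_mod_cast Nat.one_le_iff_ne_zero.mpr (Int.natAbs_ne_zero.mpr (hne i))
    have hone : (1:ℝ) ≤ ∏ i ∈ Finset.univ.erase j, ((h i).natAbs : ℝ) ^ α := by
      calc (1:ℝ) = ∏ _i ∈ Finset.univ.erase j, (1:ℝ) := by simp
        _ ≤ ∏ i ∈ Finset.univ.erase j, ((h i).natAbs : ℝ) ^ α :=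
          Finset.prod_le_prod (by intros; norm_num) (fun i _ => h1 i)
    have hj : ((h j).natAbs : ℝ) ^ α ≤ m := by
      refine le_trans ?_ hle
      rw [← Finset.mul_prod_erase Finset.univ _ (Finset.mem_univ j)]
      exact le_mul_of_one_le_right (Real.rpow_nonneg (by positivity) _) hone
    have h2 : (((h j).natAbs:ℝ) ^ α) ^ (1/α) ≤ m ^ (1/α) :=
      Real.rpow_le_rpow (Real.rpow_nonneg (by positivity) _) hj (by positivity)
    rwa [← Real.rpow_mul (by positivity), mul_one_div, div_self hα0.ne',
      Real.rpow_one] at h2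
  have hfin : B.Finite := by
    set N : ℕ := ⌈m ^ (1/α)⌉₊ with hN
    have hsub : B ⊆ Set.pi Set.univ (fun _ : Fin s => Set.Icc (-(N:ℤ)) (N:ℤ)) := by
      intro h hh j _
      have h1 : ((h j).natAbs : ℝ) ≤ (N : ℝ) := (hbound h hh j).trans (Nat.le_ceil _)
      have h2 : ((h j).natAbs : ℤ) ≤ (N : ℤ) := by exact_mod_cast h1
      have h3 : |h j| ≤ (N:ℤ) := by rw [Int.abs_eq_natAbs]; exact h2
      simpa [Set.mem_Icc] using abs_le.mp h3
    exact Set.Finite.subset (Set.Finite.pi fun _ => Set.finite_Icc _ _) hsub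
  refine ⟨hfin, ?_⟩
  set F := hfin.toFinset with hF
  have hcard : (B.ncard : ℝ) = (F.card : ℝ) := by
    rw [Set.ncard_eq_toFinset_card B hfin]
  -- pointwise bound
  have hpt : ∀ h ∈ F, m ^ (-q) ≤ ∏ j, ((h j).natAbs : ℝ) ^ (-(α * q)) := by
    intro h hhF
    have hh : h ∈ B := hfin.mem_toFinset.mp hhF
    obtain ⟨hne, hle⟩ := hh
    have hpos : ∀ j : Fin s, (0:ℝ) < ((h j).natAbs : ℝ) := by
      intro j
      exact_mod_cast Nat.pos_of_ne_zero (Int.natAbs_ne_zero.mpr (hne j))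
    have hP : (0:ℝ) < ∏ j, ((h j).natAbs : ℝ) ^ α :=
      Finset.prod_pos fun j _ => Real.rpow_pos_of_pos (hpos j) _
    have heq : ∏ j, ((h j).natAbs : ℝ) ^ (-(α * q))
        = (∏ j, ((h j).natAbs : ℝ) ^ α) ^ (-q) := by
      rw [← Real.finset_prod_rpow _ _ (fun j _ => Real.rpow_nonneg (hpos j).le _)]
      refine Finset.prod_congr rfl fun j _ => ?_
      rw [← Real.rpow_mul (hpos j).le]
      ring_nf
    rw [heq]
    exact Real.rpow_le_rpow_of_nonpos hP hle (by linarith)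
  have hkey : (F.card : ℝ) * m ^ (-q) ≤ (2 * zetaR (α * q)) ^ s := by
    calc (F.card : ℝ) * m ^ (-q) = ∑ _h ∈ F, m ^ (-q) := by
          rw [Finset.sum_const, nsmul_eq_mul]
      _ ≤ ∑ h ∈ F, ∏ j, ((h j).natAbs : ℝ) ^ (-(α * q)) := Finset.sum_le_sum hpt
      _ ≤ (2 * zetaR (α * q)) ^ s := by
          refine sum_prod_le hx s F fun h hh j => ?_
          exact (hfin.mem_toFinset.mp hh).1 j
  rw [hcard]
  have hmq : (0:ℝ) < m ^ q := Real.rpow_pos_of_pos hm _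
  have hmneg : m ^ (-q) = (m ^ q)⁻¹ := by rw [Real.rpow_neg hm.le]
  rw [hmneg] at hkey
  calc (F.card : ℝ) = (F.card : ℝ) * (m ^ q)⁻¹ * m ^ q := by
        field_simp
    _ ≤ (2 * zetaR (α * q)) ^ s * m ^ q :=
        mul_le_mul_of_nonneg_right hkey hmq.le
end

section
/- For α > 1, λ ∈ (1/α, 1], and a prime n ≥ 2, the sum W₃ := ∑_{k=−(n−1)/2, k≠0}^{(n−1)/2} [ (∑_{p∈ℤ} 1/|pn+k|^{αλ})² − ∑_{p∈ℤ} 1/|pn+k|^{2αλ} ] satisfies W₃ ≤ 2^{2αλ+1} [2ζ(αλ)]² / n^{αλ}. -/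
namespace W3aux

/-- Auxiliary function: `g t m = |m|^{-t}` for `m ≠ 0`, `0` at `m = 0`. -/
noncomputable def g (t : ℝ) (m : ℤ) : ℝ := if m = 0 then 0 else 1 / |(m : ℝ)| ^ t

lemma g_nonneg (t : ℝ) (m : ℤ) : 0 ≤ g t m := by
  unfold g; split
  · exact le_rfl
  · positivity

lemma summable_zeta {t : ℝ} (ht : 1 < t) :
    Summable (fun k : ℕ => ((k : ℝ) + 1) ^ (-t)) := by
  have h := (Real.summable_one_div_nat_add_rpow 1 t).mpr ht
  refine h.congr fun n => ?_
  rw [abs_of_nonneg (by positivity), Real.rpow_neg (by positivity), one_div]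

lemma zetaR_nonneg {t : ℝ} (ht : 1 < t) : 0 ≤ zetaR t :=
  tsum_nonneg fun k => Real.rpow_nonneg (by positivity) _

lemma hasSum_g {t : ℝ} (ht : 1 < t) : HasSum (g t) (2 * zetaR t) := by
  have hpos' : HasSum (fun n : ℕ => g t ((n : ℤ) + 1)) (zetaR t) := by
    refine ((summable_zeta ht).hasSum_iff.mpr rfl).congr_fun fun n => ?_
    have h0 : ((n : ℤ) + 1) ≠ 0 := by positivity
    simp only [g, h0, if_false]
    push_cast
    rw [abs_of_nonneg (by positivity), Real.rpow_neg (by positivity), one_div]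
  have hpos : HasSum (fun n : ℕ => g t (n : ℤ)) (zetaR t) := by
    have := (hasSum_nat_add_iff (f := fun n : ℕ => g t (n : ℤ)) 1).mp
      (hpos'.congr_fun fun n => by push_cast; ring_nf)
    simpa [g] using this
  have hneg : HasSum (fun n : ℕ => g t (-((n : ℤ) + 1))) (zetaR t) := by
    refine ((summable_zeta ht).hasSum_iff.mpr rfl).congr_fun fun n => ?_
    have h0 : (-((n : ℤ) + 1)) ≠ 0 := by
      simp only [neg_ne_zero]; positivity
    simp only [g, h0, if_false]
    push_cast
    rw [abs_neg, abs_of_nonneg (by positivity), Real.rpow_neg (by positivity), one_div]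
  simpa [two_mul] using hpos.of_nat_of_neg_add_one hneg

lemma summable_g {t : ℝ} (ht : 1 < t) : Summable (g t) := (hasSum_g ht).summable

lemma tsum_g {t : ℝ} (ht : 1 < t) : ∑' m : ℤ, g t m = 2 * zetaR t := (hasSum_g ht).tsum_eq


noncomputable def F (t : ℝ) (N k : ℤ) (p : ℤ) : ℝ := 1 / ((|p * N + k| : ℤ) : ℝ) ^ t

lemma F_nonneg (t : ℝ) (N k p : ℤ) : 0 ≤ F t N k p := by
  unfold F; positivity

lemma ne_zero {N k : ℤ} (hN : 2 ≤ N) (hk0 : k ≠ 0) (hk : 2 * |k| ≤ N - 1) (p : ℤ) :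
    p * N + k ≠ 0 := by
  rcases eq_or_ne p 0 with rfl | hp
  · simpa using hk0
  · intro h
    have h1 : 1 ≤ |p| := Int.one_le_abs hp
    have h3 : N ≤ |p| * N := le_mul_of_one_le_left (by omega) h1
    have h2 : |p * N| = |p| * N := by rw [abs_mul, abs_of_nonneg (by omega : (0:ℤ) ≤ N)]
    have h4 : |p * N| = |k| := by rw [show p * N = -k by linarith, abs_neg]
    linarith

lemma abs_lower {N k : ℤ} (hN : 2 ≤ N) (hk : 2 * |k| ≤ N - 1) {p : ℤ} (hp : p ≠ 0) :
    |p| * N ≤ 2 * |p * N + k| := by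
  have h1 : 1 ≤ |p| := Int.one_le_abs hp
  have h3 : N ≤ |p| * N := le_mul_of_one_le_left (by omega) h1
  have h5 : |p * N| ≤ |p * N + k| + |k| := by
    calc |p * N| = |(p * N + k) - k| := by ring_nf
    _ ≤ |p * N + k| + |k| := abs_sub _ _
  have h2 : |p * N| = |p| * N := by rw [abs_mul, abs_of_nonneg (by omega : (0:ℤ) ≤ N)]
  linarith

lemma F_eq_g {t : ℝ} {N k : ℤ} {p : ℤ} (h0 : p * N + k ≠ 0) :
    F t N k p = g t (p * N + k) := by
  simp only [F, g, h0, if_false]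
  rw [Int.cast_abs]

lemma F_zero {t : ℝ} {N k : ℤ} (hk0 : k ≠ 0) : F t N k 0 = g t k := by
  rw [F_eq_g (by simpa using hk0)]
  simp

lemma summable_F {t : ℝ} {N k : ℤ} (ht : 1 < t) (hN : 2 ≤ N) (hk0 : k ≠ 0)
    (hk : 2 * |k| ≤ N - 1) : Summable (F t N k) := by
  have hinj : Function.Injective (fun p : ℤ => p * N + k) := by
    intro a b hab
    simp only [add_left_inj] at hab
    exact mul_right_cancel₀ (by omega) hab
  have h := (summable_g ht).comp_injective hinj
  exact h.congr fun p => (F_eq_g (ne_zero hN hk0 hk p)).symm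

lemma b_le {t : ℝ} {N k : ℤ} (ht : 1 < t) (hN : 2 ≤ N) (hk0 : k ≠ 0)
    (hk : 2 * |k| ≤ N - 1) :
    ∑' p : ℤ, (if p = 0 then 0 else F t N k p) ≤ (2 / (N : ℝ)) ^ t * (2 * zetaR t) := by
  have hNR : (0:ℝ) < (N : ℝ) := by exact_mod_cast (by omega : (0:ℤ) < N)
  have hterm : ∀ p : ℤ, (if p = 0 then 0 else F t N k p) ≤ (2 / (N : ℝ)) ^ t * g t p := by
    intro p
    rcases eq_or_ne p 0 with rfl | hp
    · simp [g]
    · rw [if_neg hp]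
      have h1 : (1:ℝ) ≤ (|p| : ℝ) := by exact_mod_cast Int.one_le_abs hp
      have hlow := abs_lower hN hk hp
      have hlowR : (|p| : ℝ) * (N : ℝ) / 2 ≤ ((|p * N + k| : ℤ) : ℝ) := by
        have h' : ((|p| * N : ℤ) : ℝ) ≤ ((2 * |p * N + k| : ℤ) : ℝ) := by exact_mod_cast hlow
        push_cast at h' ⊢
        linarith
      have hpos : (0:ℝ) < (|p| : ℝ) * (N : ℝ) / 2 :=
        div_pos (mul_pos (by linarith) hNR) two_pos
      have hrp : ((|p| : ℝ) * (N : ℝ) / 2) ^ t ≤ (((|p * N + k| : ℤ) : ℝ)) ^ t :=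
        Real.rpow_le_rpow hpos.le hlowR (by linarith)
      have h2 : F t N k p ≤ 1 / ((|p| : ℝ) * (N : ℝ) / 2) ^ t :=
        one_div_le_one_div_of_le (Real.rpow_pos_of_pos hpos t) hrp
      refine h2.trans (le_of_eq ?_)
      have hg : g t p = 1 / |(p:ℝ)| ^ t := by simp [g, hp]
      rw [hg]
      have hrw : (|p| : ℝ) * (N : ℝ) / 2 = |(p:ℝ)| * ((N : ℝ) / 2) := by
        push_cast; ring
      rw [hrw, Real.mul_rpow (abs_nonneg _) (by positivity)]
      have h3 : (2 / (N:ℝ)) ^ t = (((N:ℝ) / 2) ^ t)⁻¹ := by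
        rw [← Real.inv_rpow (by positivity), inv_div]
      rw [h3, one_div, mul_inv, one_div]
      ring
  have hsum1 : Summable (fun p : ℤ => if p = 0 then 0 else F t N k p) := by
    refine Summable.of_nonneg_of_le (fun p => ?_) (fun p => ?_) (summable_F ht hN hk0 hk)
    · split
      · exact le_rfl
      · exact F_nonneg t N k p
    · split
      · exact F_nonneg t N k p
      · exact le_rfl
  have hsum2 : Summable (fun p : ℤ => (2 / (N : ℝ)) ^ t * g t p) := (summable_g ht).mul_left _
  calc ∑' p : ℤ, (if p = 0 then 0 else F t N k p)
      ≤ ∑' p : ℤ, (2 / (N : ℝ)) ^ t * g t p := Summable.tsum_le_tsum hterm hsum1 hsum2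
    _ = (2 / (N : ℝ)) ^ t * (2 * zetaR t) := by rw [tsum_mul_left, tsum_g ht]


lemma g_sq (t : ℝ) {k : ℤ} (hk0 : k ≠ 0) : (g t k) ^ 2 = g (2 * t) k := by
  have hka : (0:ℝ) < |(k:ℝ)| := by rw [abs_pos]; exact_mod_cast hk0
  simp only [g, hk0, if_false]
  rw [div_pow, one_pow, sq, ← Real.rpow_add hka, two_mul]

lemma key {t u : ℝ} (ht : 1 < t) (hu : u = 2 * t) {N k : ℤ} (hN : 2 ≤ N) (hk0 : k ≠ 0)
    (hk : 2 * |k| ≤ N - 1) :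
    (∑' p : ℤ, 1 / ((|p * N + k| : ℤ) : ℝ) ^ t) ^ 2
        - ∑' p : ℤ, 1 / ((|p * N + k| : ℤ) : ℝ) ^ u
      ≤ 2 * g t k * ((2 / (N : ℝ)) ^ t * (2 * zetaR t))
        + ((2 / (N : ℝ)) ^ t * (2 * zetaR t)) ^ 2 := by
  subst hu
  have ht2 : 1 < 2 * t := by linarith
  have e1 : (fun p : ℤ => 1 / ((|p * N + k| : ℤ) : ℝ) ^ t) = F t N k := rfl
  have e2 : (fun p : ℤ => 1 / ((|p * N + k| : ℤ) : ℝ) ^ (2 * t)) = F (2 * t) N k := rfl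
  rw [e1, e2]
  set B := (2 / (N : ℝ)) ^ t * (2 * zetaR t) with hB
  set a := g t k with ha
  set b := ∑' p : ℤ, (if p = 0 then 0 else F t N k p) with hbdef
  have hS : ∑' p : ℤ, F t N k p = a + b := by
    rw [Summable.tsum_eq_add_tsum_ite (summable_F ht hN hk0 hk) 0, F_zero hk0]
  have ha0 : 0 ≤ a := g_nonneg t k
  have hb0 : 0 ≤ b := tsum_nonneg fun p => by
    split
    · exact le_rfl
    · exact F_nonneg t N k p
  have hbB : b ≤ B := b_le ht hN hk0 hk
  have hB0 : 0 ≤ B :=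
    mul_nonneg (Real.rpow_nonneg (by positivity) t) (by linarith [zetaR_nonneg ht])
  have hT : a ^ 2 ≤ ∑' p : ℤ, F (2 * t) N k p := by
    have h0 := Summable.le_tsum (summable_F ht2 hN hk0 hk) 0 (fun p _ => F_nonneg (2 * t) N k p)
    refine le_trans (le_of_eq ?_) h0
    rw [F_zero hk0, ha, g_sq t hk0]
  rw [hS]
  nlinarith [mul_nonneg ha0 (sub_nonneg.mpr hbB),
    mul_nonneg (sub_nonneg.mpr hbB) (by linarith : (0:ℝ) ≤ B + b)]


end W3aux

set_option maxHeartbeats 1000000 in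
open W3aux Finset in
/-- Bound on the auxiliary sum `W₃`: for `α > 1`, `λ ∈ (1/α, 1]` and an odd prime `n`,
`∑_{k=−(n−1)/2, k≠0}^{(n−1)/2} [ (∑_{p∈ℤ} |pn+k|^{−αλ})² − ∑_{p∈ℤ} |pn+k|^{−2αλ} ]
  ≤ 2^{2αλ+1} [2ζ(αλ)]² / n^{αλ}`. -/
theorem W3_bound (α lam : ℝ) (hα : 1 < α) (hlam1 : 1 / α < lam) (hlam2 : lam ≤ 1)
    (n : ℕ) (hn : n.Prime) (hodd : Odd n) :
    ∑ k ∈ (Finset.Icc (-(((n : ℤ) - 1) / 2)) (((n : ℤ) - 1) / 2)).filter (fun k => k ≠ 0),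
        ((∑' p : ℤ, 1 / ((|p * (n : ℤ) + k| : ℤ) : ℝ) ^ (α * lam)) ^ 2
          - ∑' p : ℤ, 1 / ((|p * (n : ℤ) + k| : ℤ) : ℝ) ^ (2 * α * lam))
      ≤ (2 : ℝ) ^ (2 * α * lam + 1) * (2 * zetaR (α * lam)) ^ 2 / (n : ℝ) ^ (α * lam) := by
  have hα0 : (0:ℝ) < α := by linarith
  have h1 : 1 < lam * α := (div_lt_iff₀ hα0).mp hlam1
  have hs : 1 < α * lam := by nlinarith
  have hN : (2:ℤ) ≤ (n:ℤ) := by exact_mod_cast hn.two_le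
  have hnR2 : (2:ℝ) ≤ (n:ℝ) := by exact_mod_cast hn.two_le
  have hnR : (0:ℝ) < (n:ℝ) := by linarith
  have hcast : (((n:ℤ) : ℝ)) = (n:ℝ) := by push_cast; rfl
  set S := (Finset.Icc (-(((n : ℤ) - 1) / 2)) (((n : ℤ) - 1) / 2)).filter (fun k => k ≠ 0)
    with hS
  set B := (2 / (n : ℝ)) ^ (α * lam) * (2 * zetaR (α * lam)) with hBdef
  have hB0 : 0 ≤ B :=
    mul_nonneg (Real.rpow_nonneg (by positivity) _) (by linarith [zetaR_nonneg hs])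
  have hζ : 0 ≤ zetaR (α * lam) := zetaR_nonneg hs
  have step1 : ∑ k ∈ S,
      ((∑' p : ℤ, 1 / ((|p * (n : ℤ) + k| : ℤ) : ℝ) ^ (α * lam)) ^ 2
        - ∑' p : ℤ, 1 / ((|p * (n : ℤ) + k| : ℤ) : ℝ) ^ (2 * α * lam))
      ≤ ∑ k ∈ S, (2 * g (α * lam) k * B + B ^ 2) := by
    refine Finset.sum_le_sum fun k hk => ?_
    rw [hS, Finset.mem_filter, Finset.mem_Icc] at hk
    obtain ⟨⟨hk1, hk2⟩, hk0⟩ := hk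
    have hkabs : 2 * |k| ≤ (n:ℤ) - 1 := by
      have := abs_le.mpr ⟨hk1, hk2⟩
      omega
    have h := key (t := α * lam) (u := 2 * α * lam) hs (by ring) hN hk0 hkabs
    rw [hcast] at h
    exact h
  have step2 : ∑ k ∈ S, (2 * g (α * lam) k * B + B ^ 2)
      = 2 * B * (∑ k ∈ S, g (α * lam) k) + (S.card : ℝ) * B ^ 2 := by
    rw [Finset.sum_add_distrib, Finset.sum_const, nsmul_eq_mul, Finset.mul_sum]
    congr 1
    exact Finset.sum_congr rfl fun k _ => by ring
  have hsumg : ∑ k ∈ S, g (α * lam) k ≤ 2 * zetaR (α * lam) := by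
    refine le_trans (Summable.sum_le_tsum S (fun i _ => g_nonneg _ i) (summable_g hs)) ?_
    exact le_of_eq (tsum_g hs)
  have hcard : (S.card : ℝ) ≤ (n : ℝ) := by
    have h1 : S.card ≤ n := by
      refine le_trans (Finset.card_filter_le _ _) ?_
      rw [Int.card_Icc]
      omega
    exact_mod_cast h1
  have step3 : 2 * B * (∑ k ∈ S, g (α * lam) k) + (S.card : ℝ) * B ^ 2
      ≤ 2 * B * (2 * zetaR (α * lam)) + (n : ℝ) * B ^ 2 := by
    have := mul_le_mul_of_nonneg_left hsumg (by linarith : (0:ℝ) ≤ 2 * B)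
    have := mul_le_mul_of_nonneg_right hcard (sq_nonneg B)
    linarith
  -- final arithmetic
  set A := (2:ℝ) ^ (α * lam) with hA
  set C := (n:ℝ) ^ (α * lam) with hC
  set Z := 2 * zetaR (α * lam) with hZ
  have hA2 : (2:ℝ) ≤ A := by
    calc (2:ℝ) = 2 ^ (1:ℝ) := (Real.rpow_one 2).symm
    _ ≤ 2 ^ (α * lam) := Real.rpow_le_rpow_of_exponent_le one_le_two hs.le
  have hC0 : (0:ℝ) < C := Real.rpow_pos_of_pos hnR _
  have hcC : (n : ℝ) ≤ C := by
    calc (n:ℝ) = (n:ℝ) ^ (1:ℝ) := (Real.rpow_one _).symm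
    _ ≤ (n:ℝ) ^ (α * lam) := Real.rpow_le_rpow_of_exponent_le (by linarith) hs.le
  have hZ0 : 0 ≤ Z := by rw [hZ]; linarith
  have hBAC : B = A / C * Z := by
    rw [hBdef, hA, hC, hZ, Real.div_rpow (by norm_num) hnR.le]
  have hrhs : (2 : ℝ) ^ (2 * α * lam + 1) * Z ^ 2 / C = 2 * A ^ 2 * (Z ^ 2 / C) := by
    rw [Real.rpow_add two_pos, Real.rpow_one,
      show 2 * α * lam = (α * lam) * 2 by ring,
      Real.rpow_mul (by norm_num : (0:ℝ) ≤ 2), hA]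
    rw [show ((2:ℝ)) = ((2:ℕ):ℝ) from by norm_num, Real.rpow_natCast]
    ring
  have step4 : 2 * B * Z + (n : ℝ) * B ^ 2 ≤ 2 * A ^ 2 * (Z ^ 2 / C) := by
    rw [hBAC]
    have e1 : 2 * (A / C * Z) * Z = 2 * A * (Z ^ 2 / C) := by ring
    have e2 : (n : ℝ) * (A / C * Z) ^ 2 = (n : ℝ) / C * (A ^ 2 * (Z ^ 2 / C)) := by ring
    rw [e1, e2]
    have ht1 : (n : ℝ) / C ≤ 1 := (div_le_one hC0).mpr hcC
    have ht0 : 0 ≤ (n : ℝ) / C := by positivity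
    have hD0 : 0 ≤ Z ^ 2 / C := by positivity
    nlinarith [mul_nonneg hD0 (by linarith : (0:ℝ) ≤ A - 2),
      mul_nonneg (mul_nonneg hD0 (by linarith : (0:ℝ) ≤ A)) (by linarith : (0:ℝ) ≤ A - 2),
      mul_nonneg (mul_nonneg hD0 (by nlinarith : (0:ℝ) ≤ A ^ 2)) (by linarith : (0:ℝ) ≤ 1 - (n:ℝ) / C)]
  calc ∑ k ∈ S,
      ((∑' p : ℤ, 1 / ((|p * (n : ℤ) + k| : ℤ) : ℝ) ^ (α * lam)) ^ 2
        - ∑' p : ℤ, 1 / ((|p * (n : ℤ) + k| : ℤ) : ℝ) ^ (2 * α * lam))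
      ≤ 2 * B * (2 * zetaR (α * lam)) + (n : ℝ) * B ^ 2 := by
        refine le_trans step1 ?_
        rw [step2]
        exact step3
    _ = 2 * B * Z + (n : ℝ) * B ^ 2 := by rw [hZ]
    _ ≤ 2 * A ^ 2 * (Z ^ 2 / C) := step4
    _ = (2 : ℝ) ^ (2 * α * lam + 1) * (2 * zetaR (α * lam)) ^ 2 / (n : ℝ) ^ (α * lam) := by
        rw [← hrhs, hZ, hC]
end
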